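/- Let K = ∫₀^∞ (log u)/(2 cosh²(u/2)) du. Then there exist constants C and β₀ > 0 such that for all β ≥ β₀, the particle–hole bubble B_ph(β) = ∫_{[−1,1]²} (−δ_β(x y)) dx dy satisfies |B_ph(β) + 2 log β − 2 K| ≤ C e^{−β}. -/

import Mathlib

open MeasureTheory Filter Real

/-- The approximate delta function `δ_β(E) = β/(4 cosh²(βE/2))`. -/
noncomputable def deltaB (β E : ℝ) : ℝ := β / (4 * (Real.cosh (β * E / 2)) ^ 2)

/-- The particle–hole bubble `B_ph(β) = ∫_{[-1,1]²} (-δ_β(xy)) dx dy`. -/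
noncomputable def Bph (β : ℝ) : ℝ :=
  ∫ x in (-1 : ℝ)..1, ∫ y in (-1 : ℝ)..1, -deltaB β (x * y)

lemma myHasDerivAt_tanh (x : ℝ) : HasDerivAt Real.tanh (1 / Real.cosh x ^ 2) x := by
  have h : Real.tanh = fun y => Real.sinh y / Real.cosh y :=
    funext fun y => Real.tanh_eq_sinh_div_cosh y
  rw [h]
  have hd := (Real.hasDerivAt_sinh x).div (Real.hasDerivAt_cosh x) (Real.cosh_pos x).ne'
  refine hd.congr_deriv (Eq.symm ?_)
  have := Real.cosh_sq_sub_sinh_sq x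
  field_simp
  nlinarith [Real.cosh_pos x]

lemma sinh_le_mul_cosh {x : ℝ} (hx : 0 ≤ x) : Real.sinh x ≤ x * Real.cosh x := by
  have key : MonotoneOn (fun t : ℝ => t * Real.cosh t - Real.sinh t) (Set.Ici 0) := by
    apply monotoneOn_of_deriv_nonneg (convex_Ici 0)
    · exact ((continuous_id.mul Real.continuous_cosh).sub Real.continuous_sinh).continuousOn
    · intro t ht
      exact (((hasDerivAt_id' t).mul (Real.hasDerivAt_cosh t)).sub
        (Real.hasDerivAt_sinh t)).differentiableAt.differentiableWithinAt
    · intro t ht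
      rw [interior_Ici] at ht
      have hd := (((hasDerivAt_id' t).mul (Real.hasDerivAt_cosh t)).sub (Real.hasDerivAt_sinh t))
      rw [show (fun t => t * Real.cosh t - Real.sinh t) = ((fun x => x) * Real.cosh - Real.sinh) from rfl, hd.deriv]
      have h1 : (0:ℝ) ≤ Real.sinh t := Real.sinh_nonneg_iff.2 (le_of_lt ht)
      nlinarith [(Set.mem_Ioi.1 ht).le]
  have h0 := key (Set.self_mem_Ici) (Set.mem_Ici.2 hx) hx
  simp only [Real.sinh_zero, Real.cosh_zero, zero_mul, sub_zero, mul_zero] at h0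
  linarith

lemma abs_tanh_le {x : ℝ} : |Real.tanh x| ≤ |x| := by
  have key : ∀ y : ℝ, 0 ≤ y → Real.tanh y ≤ y := by
    intro y hy
    rw [Real.tanh_eq_sinh_div_cosh, div_le_iff₀ (Real.cosh_pos y)]
    exact sinh_le_mul_cosh hy
  have nn : ∀ y : ℝ, 0 ≤ y → 0 ≤ Real.tanh y := fun y hy => by
    rw [Real.tanh_eq_sinh_div_cosh]
    exact div_nonneg (Real.sinh_nonneg_iff.2 hy) (Real.cosh_pos y).le
  rcases le_total 0 x with hx | hx
  · rw [abs_of_nonneg (nn x hx), abs_of_nonneg hx]; exact key x hx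
  · have h1 := key (-x) (by linarith)
    have h2 := nn (-x) (by linarith)
    rw [Real.tanh_neg] at h1 h2
    rw [abs_of_nonpos (by linarith), abs_of_nonpos hx]
    linarith

lemma tanh_le_one (x : ℝ) : Real.tanh x ≤ 1 := by
  rw [Real.tanh_eq_sinh_div_cosh, div_le_one (Real.cosh_pos x)]
  nlinarith [Real.cosh_sub_sinh x, Real.exp_pos (-x)]

lemma one_sub_tanh_le {x : ℝ} : 1 - Real.tanh x ≤ 2 * Real.exp (-(2*x)) := by
  have hc : Real.cosh x ≥ Real.exp x / 2 := by
    rw [Real.cosh_eq]; nlinarith [Real.exp_pos (-x)]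
  have h1 : 1 - Real.tanh x = Real.exp (-x) / Real.cosh x := by
    rw [Real.tanh_eq_sinh_div_cosh]
    rw [eq_div_iff (Real.cosh_pos x).ne', sub_mul, div_mul_cancel₀ _ (Real.cosh_pos x).ne', one_mul]
    linarith [Real.cosh_sub_sinh x]
  rw [h1]
  have hcp := Real.cosh_pos x
  rw [div_le_iff₀ hcp]
  have h2 : 2 * Real.exp (-(2*x)) * (Real.exp x / 2) = Real.exp (-x) := by
    rw [mul_comm (2:ℝ) (Real.exp (-(2*x))), mul_assoc]
    rw [show (2:ℝ) * (Real.exp x / 2) = Real.exp x by ring, ← Real.exp_add]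
    ring_nf
  calc Real.exp (-x) = 2 * Real.exp (-(2*x)) * (Real.exp x / 2) := h2.symm
    _ ≤ 2 * Real.exp (-(2*x)) * Real.cosh x :=
        mul_le_mul_of_nonneg_left hc (by positivity)

lemma continuous_deltaB (β : ℝ) : Continuous fun E => deltaB β E := by
  apply Continuous.div continuous_const
  · fun_prop
  · intro E
    have := Real.cosh_pos (β * E / 2)
    positivity

lemma inner_int (β : ℝ) {x : ℝ} (hx : x ≠ 0) :
    (∫ y in (-1:ℝ)..1, -deltaB β (x * y)) = -Real.tanh (β * x / 2) / x := by
  have hder : ∀ y ∈ Set.uIcc (-1:ℝ) 1,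
      HasDerivAt (fun y => -Real.tanh (β * x / 2 * y) / (2 * x)) (-deltaB β (x * y)) y := by
    intro y _
    have h1 : HasDerivAt (fun y : ℝ => β * x / 2 * y) (β * x / 2) y := by
      simpa using (hasDerivAt_id y).const_mul (β * x / 2)
    have h2 := (myHasDerivAt_tanh (β * x / 2 * y)).comp y h1
    have h3 := (h2.neg).div_const (2 * x)
    refine h3.congr_deriv (Eq.symm ?_)
    rw [deltaB]
    have harg : β * (x * y) / 2 = β * x / 2 * y := by ring
    rw [harg]
    field_simp
    ring
  have hint : IntervalIntegrable (fun y => -deltaB β (x * y)) volume (-1) 1 :=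
    (((continuous_deltaB β).comp (continuous_const.mul continuous_id)).neg).intervalIntegrable _ _
  rw [intervalIntegral.integral_eq_sub_of_hasDerivAt hder hint]
  have : β * x / 2 * (-1) = -(β * x / 2) := by ring
  rw [mul_one, this, Real.tanh_neg]
  field_simp
  ring

lemma myContinuous_tanh : Continuous Real.tanh := by
  have h : Real.tanh = fun y => Real.sinh y / Real.cosh y :=
    funext fun y => Real.tanh_eq_sinh_div_cosh y
  rw [h]
  exact Real.continuous_sinh.div Real.continuous_cosh fun x => (Real.cosh_pos x).ne'

lemma g_bound (β x : ℝ) : ‖-Real.tanh (β * x / 2) / x‖ ≤ β / 2 ∨ β < 0 := by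
  rcases le_or_gt 0 β with hβ | hβ
  · left
    rcases eq_or_ne x 0 with rfl | hx
    · simp; positivity
    · rw [norm_div, norm_neg]
      rw [div_le_iff₀ (norm_pos_iff.2 hx)]
      calc ‖Real.tanh (β * x / 2)‖ ≤ |β * x / 2| := abs_tanh_le
        _ = β / 2 * ‖x‖ := by rw [abs_div, abs_mul, abs_of_nonneg hβ]; simp [Real.norm_eq_abs]; ring
  · right; exact hβ

lemma g_intble (β : ℝ) (hβ : 0 < β) (a b : ℝ) :
    IntervalIntegrable (fun x => -Real.tanh (β * x / 2) / x) volume a b := by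
  rw [intervalIntegrable_iff]
  apply Integrable.mono' (g := fun _ => β / 2)
  · exact integrableOn_const (hs := measure_Ioc_lt_top.ne)
  · exact (((myContinuous_tanh.comp (by fun_prop)).neg).measurable.div
      measurable_id).aestronglyMeasurable
  · refine ae_of_all _ fun x => ?_
    rcases g_bound β x with h | h
    · exact h
    · linarith

lemma f_intble (a b : ℝ) :
    IntervalIntegrable (fun u => Real.tanh (u / 2) / u) volume a b := by
  rw [intervalIntegrable_iff]
  apply Integrable.mono' (g := fun _ => (1:ℝ) / 2)
  · exact integrableOn_const (hs := measure_Ioc_lt_top.ne)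
  · exact ((myContinuous_tanh.comp (by fun_prop)).measurable.div
      measurable_id).aestronglyMeasurable
  · refine ae_of_all _ fun x => ?_
    rcases eq_or_ne x 0 with rfl | hx
    · simp
    · rw [norm_div]
      rw [div_le_iff₀ (norm_pos_iff.2 hx)]
      calc ‖Real.tanh (x / 2)‖ ≤ |x / 2| := abs_tanh_le
        _ = 1 / 2 * ‖x‖ := by rw [abs_div]; simp [Real.norm_eq_abs]; ring

lemma Bph_eq (β : ℝ) (hβ : 0 < β) :
    Bph β = -2 * ∫ u in (0:ℝ)..β, Real.tanh (u / 2) / u := by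
  have h0 : ∀ᵐ x : ℝ, x ≠ 0 := by
    rw [Filter.eventually_iff, mem_ae_iff]
    have : {x : ℝ | x ≠ 0}ᶜ = {0} := by ext; simp
    rw [this]; exact measure_singleton 0
  have h1 : Bph β = ∫ x in (-1:ℝ)..1, -Real.tanh (β * x / 2) / x := by
    rw [Bph]
    apply intervalIntegral.integral_congr_ae
    filter_upwards [h0] with x hx _
    exact inner_int β hx
  have geven : ∀ x : ℝ, -Real.tanh (β * (-x) / 2) / (-x) = -Real.tanh (β * x / 2) / x := by
    intro x
    have : β * (-x) / 2 = -(β * x / 2) := by ring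
    rw [this, Real.tanh_neg, neg_neg, div_neg, neg_div]
  have h2 : (∫ x in (-1:ℝ)..0, -Real.tanh (β * x / 2) / x)
      = ∫ x in (0:ℝ)..1, -Real.tanh (β * x / 2) / x := by
    have hcn := intervalIntegral.integral_comp_neg (a := (0:ℝ)) (b := 1)
      (fun x => -Real.tanh (β * x / 2) / x)
    simp only [geven, neg_zero] at hcn
    exact hcn.symm
  have h3 : (∫ x in (-1:ℝ)..1, -Real.tanh (β * x / 2) / x)
      = 2 * ∫ x in (0:ℝ)..1, -Real.tanh (β * x / 2) / x := by
    rw [← intervalIntegral.integral_add_adjacent_intervals (g_intble β hβ (-1) 0)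
      (g_intble β hβ 0 1), h2]
    ring
  have h4 : (∫ x in (0:ℝ)..1, -Real.tanh (β * x / 2) / x)
      = ∫ u in (0:ℝ)..β, -(Real.tanh (u / 2) / u) := by
    have hfg : ∀ x : ℝ, -Real.tanh (β * x / 2) / x
        = β • (fun u => -(Real.tanh (u / 2) / u)) (β * x) := by
      intro x
      rcases eq_or_ne x 0 with rfl | hx
      · simp
      · simp only [smul_eq_mul]
        rw [show β * x / 2 = (β * x) / 2 by ring]
        field_simp
    rw [intervalIntegral.integral_congr (g := fun x => β • (fun u => -(Real.tanh (u / 2) / u)) (β * x))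
      (fun x _ => hfg x)]
    rw [intervalIntegral.integral_smul]
    rw [intervalIntegral.smul_integral_comp_mul_left (fun u => -(Real.tanh (u / 2) / u)) β]
    norm_num
  rw [h1, h3, h4, intervalIntegral.integral_neg]
  ring

lemma le_exp_half {u : ℝ} (hu : 0 ≤ u) : u ≤ Real.exp (u / 2) := by
  have h := Real.add_one_le_exp (u / 4)
  have h2 : Real.exp (u / 2) = Real.exp (u / 4) ^ 2 := by
    rw [← Real.exp_nat_mul]; norm_num; ring
  have h3 := mul_le_mul h h (by linarith) (Real.exp_pos (u/4)).le
  nlinarith [sq_nonneg (u/4 - 1)]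

lemma log_intble_Ioc01 : IntegrableOn Real.log (Set.Ioc (0:ℝ) 1) := by
  apply integrableOn_Ioc_of_intervalIntegral_norm_bounded_left
    (a := fun n : ℕ => Real.exp (-(n:ℝ))) (l := atTop) (I := 1)
  · intro n
    have h1 : Real.exp (-(n:ℝ)) ≤ 1 := Real.exp_le_one_iff.2 (neg_nonpos.2 (Nat.cast_nonneg _))
    exact (intervalIntegrable_iff_integrableOn_Ioc_of_le h1).1
      (intervalIntegral.intervalIntegrable_log (Set.notMem_uIcc_of_lt (Real.exp_pos _) one_pos))
  · exact Real.tendsto_exp_neg_atTop_nhds_zero.comp tendsto_natCast_atTop_atTop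
  · refine Filter.Eventually.of_forall fun n => ?_
    set a := Real.exp (-(n:ℝ)) with ha
    have hap : 0 < a := Real.exp_pos _
    have ha1 : a ≤ 1 := Real.exp_le_one_iff.2 (neg_nonpos.2 (Nat.cast_nonneg _))
    have hcongr : ∫ x in Set.Ioc a 1, ‖Real.log x‖ = ∫ x in Set.Ioc a 1, -Real.log x := by
      apply setIntegral_congr_fun measurableSet_Ioc
      intro x hx
      show ‖Real.log x‖ = -Real.log x
      rw [Real.norm_eq_abs, abs_of_nonpos (Real.log_nonpos (hap.trans hx.1).le hx.2)]
    rw [hcongr]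
    have hII : IntervalIntegrable Real.log volume a 1 :=
      intervalIntegral.intervalIntegrable_log (Set.notMem_uIcc_of_lt hap one_pos)
    have : ∫ x in Set.Ioc a 1, -Real.log x = -(∫ x in a..1, Real.log x) := by
      rw [← intervalIntegral.integral_of_le ha1, intervalIntegral.integral_neg]
    have hval : (∫ x in a..1, Real.log x) = 1 * Real.log 1 - a * Real.log a - 1 + a :=
      by open intervalIntegral in exact integral_log
    rw [this, hval]
    have hlog : a * Real.log a ≤ 0 :=
      mul_nonpos_of_nonneg_of_nonpos hap.le (Real.log_nonpos hap.le ha1)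
    simp only [Real.log_one, mul_zero, mul_one]
    nlinarith

lemma log_intble_Ioc (β : ℝ) (hβ : 1 ≤ β) : IntegrableOn Real.log (Set.Ioc (0:ℝ) β) := by
  have h : Set.Ioc (0:ℝ) 1 ∪ Set.Ioc 1 β = Set.Ioc 0 β := Set.Ioc_union_Ioc_eq_Ioc zero_le_one hβ
  rw [← h]
  exact log_intble_Ioc01.union ((intervalIntegrable_iff_integrableOn_Ioc_of_le hβ).1
    (intervalIntegral.intervalIntegrable_log (Set.notMem_uIcc_of_lt one_pos (by linarith))))

noncomputable def Lfun (u : ℝ) : ℝ := Real.log u / (2 * Real.cosh (u / 2) ^ 2)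

lemma Lfun_meas : Measurable Lfun := by
  apply Measurable.div Real.measurable_log
  fun_prop

lemma L_intble_Ioc (β : ℝ) (hβ : 1 ≤ β) : IntegrableOn Lfun (Set.Ioc (0:ℝ) β) := by
  apply Integrable.mono' ((log_intble_Ioc β hβ).norm) Lfun_meas.aestronglyMeasurable
  refine ae_of_all _ fun u => ?_
  rw [Lfun, Real.norm_eq_abs, abs_div]
  have h1 : (1:ℝ) ≤ Real.cosh (u / 2) := Real.one_le_cosh _
  have hcp : (0:ℝ) < Real.cosh (u / 2) := Real.cosh_pos _
  have h2 : (1:ℝ) ≤ |2 * Real.cosh (u / 2) ^ 2| := by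
    rw [abs_of_pos (by positivity)]; nlinarith
  calc |Real.log u| / |2 * Real.cosh (u / 2) ^ 2| ≤ |Real.log u| / 1 := by
        apply div_le_div_of_nonneg_left (abs_nonneg _) one_pos h2
    _ = ‖Real.log u‖ := by rw [div_one, Real.norm_eq_abs]

lemma L_bound_tail {u : ℝ} (hu : 1 ≤ u) : ‖Lfun u‖ ≤ 2 * Real.exp (-(1/2) * u) := by
  have hup : (0:ℝ) < u := by linarith
  have hcosh : Real.exp (u / 2) / 2 ≤ Real.cosh (u / 2) := by
    rw [Real.cosh_eq]; nlinarith [Real.exp_pos (-(u/2))]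
  have hlog : |Real.log u| ≤ Real.exp (u / 2) := by
    rw [abs_of_nonneg (Real.log_nonneg hu)]
    calc Real.log u ≤ u - 1 := Real.log_le_sub_one_of_pos hup
      _ ≤ u := by linarith
      _ ≤ Real.exp (u / 2) := le_exp_half hup.le
  have hcp : (0:ℝ) < Real.cosh (u / 2) := Real.cosh_pos _
  rw [Lfun, Real.norm_eq_abs, abs_div, abs_of_pos (by positivity : (0:ℝ) < 2 * Real.cosh (u/2) ^ 2)]
  have hden : Real.exp (u / 2) ^ 2 / 2 ≤ 2 * Real.cosh (u / 2) ^ 2 := by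
    nlinarith [Real.exp_pos (u / 2), Real.cosh_pos (u / 2)]
  have hdenpos : (0:ℝ) < Real.exp (u / 2) ^ 2 / 2 := by positivity
  calc |Real.log u| / (2 * Real.cosh (u / 2) ^ 2)
      ≤ Real.exp (u / 2) / (Real.exp (u / 2) ^ 2 / 2) := by
        apply div_le_div₀ (Real.exp_pos _).le hlog hdenpos hden
    _ = 2 * Real.exp (-(1/2) * u) := by
        rw [div_div_eq_mul_div, pow_two, ← Real.exp_add]
        rw [show -(1/2) * u = u / 2 - (u / 2 + u / 2) by ring, Real.exp_sub]
        ring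

lemma phi_deriv {x : ℝ} (hx : 0 < x) :
    HasDerivAt (fun u => Real.log u * Real.tanh (u / 2))
      (Real.tanh (x / 2) / x + Lfun x) x := by
  have h1 : HasDerivAt (fun u : ℝ => u / 2) (1 / 2) x := (hasDerivAt_id x).div_const 2
  have h2 := (myHasDerivAt_tanh (x / 2)).comp x h1
  have h3 := (Real.hasDerivAt_log hx.ne').mul h2
  refine h3.congr_deriv (Eq.symm ?_)
  rw [Lfun]
  simp only [Function.comp_apply]
  field_simp

lemma psi_deriv {x : ℝ} (hx : 0 < x) :
    HasDerivAt (fun u => Real.log u * (Real.tanh (u / 2) - 1))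
      ((Real.tanh (x / 2) - 1) / x + Lfun x) x := by
  have h1 : HasDerivAt (fun u : ℝ => u / 2) (1 / 2) x := (hasDerivAt_id x).div_const 2
  have h2 := ((myHasDerivAt_tanh (x / 2)).comp x h1).sub_const 1
  have h3 := (Real.hasDerivAt_log hx.ne').mul h2
  refine h3.congr_deriv (Eq.symm ?_)
  rw [Lfun]
  simp only [Function.comp_apply]
  field_simp

lemma ftc_phi (β : ℝ) (hβ : 1 ≤ β) :
    (∫ u in (0:ℝ)..β, (Real.tanh (u / 2) / u + Lfun u))
      = Real.log β * Real.tanh (β / 2) := by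
  have hβ0 : (0:ℝ) < β := by linarith
  have hcont : ContinuousOn (fun u => Real.log u * Real.tanh (u / 2)) (Set.Icc 0 β) := by
    intro x hx
    rcases eq_or_lt_of_le hx.1 with rfl | hxpos
    · have hb : Tendsto (fun u : ℝ => Real.log u * Real.tanh (u / 2)) (nhdsWithin 0 (Set.Icc 0 β))
          (nhds 0) := by
        apply squeeze_zero_norm' (a := fun u => |u * Real.log u|)
        · refine eventually_nhdsWithin_of_forall fun u hu => ?_
          rw [Real.norm_eq_abs, abs_mul, abs_mul]
          have h1 : |Real.tanh (u / 2)| ≤ |u| := le_trans abs_tanh_le (by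
            rw [abs_div]
            calc |u| / |(2:ℝ)| ≤ |u| / 1 := by
                  apply div_le_div_of_nonneg_left (abs_nonneg _) one_pos (by norm_num)
              _ = |u| := div_one _)
          calc |Real.log u| * |Real.tanh (u / 2)| ≤ |Real.log u| * |u| :=
                mul_le_mul_of_nonneg_left h1 (abs_nonneg _)
            _ = |u| * |Real.log u| := mul_comm _ _
        · have := (Real.continuous_mul_log.tendsto 0).mono_left
            (nhdsWithin_le_nhds (s := Set.Icc (0:ℝ) β))
          simpa using this.abs
      rw [ContinuousWithinAt]
      simpa using hb
    · exact ((Real.continuousAt_log hxpos.ne').mul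
        ((myContinuous_tanh.comp (continuous_id.div_const 2)).continuousAt)).continuousWithinAt
  have hderiv : ∀ x ∈ Set.Ioo (0:ℝ) β, HasDerivWithinAt
      (fun u => Real.log u * Real.tanh (u / 2)) (Real.tanh (x / 2) / x + Lfun x) (Set.Ioi x) x :=
    fun x hx => (phi_deriv hx.1).hasDerivWithinAt
  have hint : IntervalIntegrable (fun u => Real.tanh (u / 2) / u + Lfun u) volume 0 β :=
    (f_intble 0 β).add ((intervalIntegrable_iff_integrableOn_Ioc_of_le hβ0.le).2
      (L_intble_Ioc β hβ))
  rw [intervalIntegral.integral_eq_sub_of_hasDeriv_right_of_le hβ0.le hcont hderiv hint]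
  simp [Real.log_zero]

lemma h1_intble (β : ℝ) (hβ : 1 ≤ β) :
    IntegrableOn (fun u => (Real.tanh (u / 2) - 1) / u) (Set.Ioi β) := by
  apply Integrable.mono' (g := fun u => 2 * Real.exp (-1 * u))
  · exact (exp_neg_integrableOn_Ioi β one_pos).const_mul 2
  · exact (((myContinuous_tanh.comp (continuous_id.div_const 2)).sub
      continuous_const).measurable.div measurable_id).aestronglyMeasurable
  · rw [ae_restrict_iff' measurableSet_Ioi]
    refine ae_of_all _ fun u hu => ?_
    have hu1 : (1:ℝ) ≤ u := le_trans hβ (le_of_lt hu)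
    have hup : (0:ℝ) < u := by linarith
    have ht1 : Real.tanh (u / 2) ≤ 1 := tanh_le_one _
    have hb : 1 - Real.tanh (u / 2) ≤ 2 * Real.exp (-u) := by
      have := one_sub_tanh_le (x := u / 2)
      rwa [show -(2 * (u / 2)) = -u by ring] at this
    rw [Real.norm_eq_abs, abs_div, abs_of_nonpos (by linarith), abs_of_pos hup, neg_sub]
    rw [div_le_iff₀ hup]
    calc 1 - Real.tanh (u / 2) ≤ 2 * Real.exp (-u) := hb
      _ = 2 * Real.exp (-1 * u) * 1 := by ring_nf
      _ ≤ 2 * Real.exp (-1 * u) * u := by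
          apply mul_le_mul_of_nonneg_left hu1 (by positivity)

lemma L_intble_Ioi (β : ℝ) (hβ : 1 ≤ β) : IntegrableOn Lfun (Set.Ioi β) := by
  apply Integrable.mono' (g := fun u => 2 * Real.exp (-(1/2) * u))
  · exact (exp_neg_integrableOn_Ioi β (by norm_num)).const_mul 2
  · exact Lfun_meas.aestronglyMeasurable
  · rw [ae_restrict_iff' measurableSet_Ioi]
    exact ae_of_all _ fun u hu => L_bound_tail (le_trans hβ (le_of_lt hu))

lemma psi_tendsto : Tendsto (fun u => Real.log u * (Real.tanh (u / 2) - 1)) atTop (nhds 0) := by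
  apply squeeze_zero_norm' (a := fun u => 2 * Real.exp (-(1/2) * u))
  · filter_upwards [Filter.eventually_ge_atTop (1:ℝ)] with u hu
    have hup : (0:ℝ) < u := by linarith
    have ht1 : Real.tanh (u / 2) ≤ 1 := tanh_le_one _
    have hb : 1 - Real.tanh (u / 2) ≤ 2 * Real.exp (-u) := by
      have := one_sub_tanh_le (x := u / 2)
      rwa [show -(2 * (u / 2)) = -u by ring] at this
    rw [Real.norm_eq_abs, abs_mul, abs_of_nonneg (Real.log_nonneg hu),
      abs_of_nonpos (by linarith)]
    have hlogu : Real.log u ≤ u := le_trans (Real.log_le_sub_one_of_pos hup) (by linarith)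
    calc Real.log u * -(Real.tanh (u / 2) - 1) ≤ u * (2 * Real.exp (-u)) := by
          apply mul_le_mul hlogu (by linarith) (by linarith) hup.le
      _ ≤ Real.exp (u / 2) * (2 * Real.exp (-u)) := by
          apply mul_le_mul_of_nonneg_right (le_exp_half hup.le) (by positivity)
      _ = 2 * Real.exp (-(1/2) * u) := by
          rw [← mul_assoc, mul_comm _ (2:ℝ), mul_assoc, ← Real.exp_add]
          ring_nf
  · have h1 : Tendsto (fun u : ℝ => (1/2) * u) atTop atTop :=
      Tendsto.const_mul_atTop (by norm_num) tendsto_id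
    have h2 := Real.tendsto_exp_neg_atTop_nhds_zero.comp h1
    have h3 := h2.const_mul (2:ℝ)
    simpa [Function.comp, mul_comm] using h3

lemma ftc_psi (β : ℝ) (hβ : 1 ≤ β) :
    (∫ u in Set.Ioi β, ((Real.tanh (u / 2) - 1) / u + Lfun u))
      = -(Real.log β * (Real.tanh (β / 2) - 1)) := by
  have hβ0 : (0:ℝ) < β := by linarith
  have := integral_Ioi_of_hasDerivAt_of_tendsto
    (f := fun u => Real.log u * (Real.tanh (u / 2) - 1))
    (f' := fun u => (Real.tanh (u / 2) - 1) / u + Lfun u) (a := β) (m := 0)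
    ?_ ?_ ?_ psi_tendsto
  · rw [this]; ring
  · exact ((Real.continuousAt_log hβ0.ne').mul
      (((myContinuous_tanh.comp (continuous_id.div_const 2)).sub
        continuous_const).continuousAt)).continuousWithinAt
  · exact fun x hx => psi_deriv (lt_trans hβ0 hx)
  · exact (h1_intble β hβ).add (L_intble_Ioi β hβ)

lemma key_identity (β : ℝ) (hβ : 1 ≤ β) :
    (∫ u in Set.Ioi (0:ℝ), Lfun u)
      = Real.log β - (∫ u in (0:ℝ)..β, Real.tanh (u / 2) / u)
        + ∫ u in Set.Ioi β, (1 - Real.tanh (u / 2)) / u := by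
  have hβ0 : (0:ℝ) < β := by linarith
  -- split K
  have hsplit : (∫ u in Set.Ioi (0:ℝ), Lfun u)
      = (∫ u in Set.Ioc (0:ℝ) β, Lfun u) + ∫ u in Set.Ioi β, Lfun u := by
    rw [← setIntegral_union (Set.Ioc_disjoint_Ioi le_rfl) measurableSet_Ioi
      (L_intble_Ioc β hβ) (L_intble_Ioi β hβ), Set.Ioc_union_Ioi_eq_Ioi hβ0.le]
  -- first piece
  have hL1 : (∫ u in Set.Ioc (0:ℝ) β, Lfun u)
      = Real.log β * Real.tanh (β / 2) - ∫ u in (0:ℝ)..β, Real.tanh (u / 2) / u := by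
    have hadd : (∫ u in (0:ℝ)..β, (Real.tanh (u / 2) / u + Lfun u))
        = (∫ u in (0:ℝ)..β, Real.tanh (u / 2) / u) + ∫ u in (0:ℝ)..β, Lfun u :=
      intervalIntegral.integral_add (f_intble 0 β)
        ((intervalIntegrable_iff_integrableOn_Ioc_of_le hβ0.le).2 (L_intble_Ioc β hβ))
    have h2 : (∫ u in (0:ℝ)..β, Lfun u) = ∫ u in Set.Ioc (0:ℝ) β, Lfun u :=
      intervalIntegral.integral_of_le hβ0.le
    rw [← h2, eq_sub_iff_add_eq, add_comm, ← hadd, ftc_phi β hβ]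
  -- second piece
  have hL2 : (∫ u in Set.Ioi β, Lfun u)
      = Real.log β * (1 - Real.tanh (β / 2)) + ∫ u in Set.Ioi β, (1 - Real.tanh (u / 2)) / u := by
    have hadd : (∫ u in Set.Ioi β, ((Real.tanh (u / 2) - 1) / u + Lfun u))
        = (∫ u in Set.Ioi β, (Real.tanh (u / 2) - 1) / u) + ∫ u in Set.Ioi β, Lfun u :=
      integral_add (h1_intble β hβ) (L_intble_Ioi β hβ)
    have hneg : (∫ u in Set.Ioi β, (Real.tanh (u / 2) - 1) / u)
        = -∫ u in Set.Ioi β, (1 - Real.tanh (u / 2)) / u := by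
      rw [← integral_neg]
      apply integral_congr_ae
      refine ae_of_all _ fun u => ?_
      show (Real.tanh (u / 2) - 1) / u = -((1 - Real.tanh (u / 2)) / u)
      rw [← neg_div, neg_sub]
    have := ftc_psi β hβ
    rw [hadd, hneg] at this
    have hgoal : (∫ u in Set.Ioi β, Lfun u)
        = -(Real.log β * (Real.tanh (β / 2) - 1))
          + ∫ u in Set.Ioi β, (1 - Real.tanh (u / 2)) / u := by linarith
    rw [hgoal]; ring
  rw [hsplit, hL1, hL2]
  ring

/-- **Asymptotics of the particle–hole bubble.** With
`K = ∫₀^∞ (log u)/(2 cosh²(u/2)) du`, there are constants `C` and `β₀ > 0` such that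
`|B_ph(β) + 2 log β - 2 K| ≤ C e^{-β}` for all `β ≥ β₀`. -/
theorem stmt_18 :
    ∃ C β₀ : ℝ, 0 < β₀ ∧ ∀ β : ℝ, β₀ ≤ β →
      |Bph β + 2 * Real.log β -
          2 * ∫ u in Set.Ioi (0 : ℝ), Real.log u / (2 * (Real.cosh (u / 2)) ^ 2)| ≤
        C * Real.exp (-β) := by
  refine ⟨4, 1, one_pos, fun β hβ => ?_⟩
  have hβ0 : (0:ℝ) < β := by linarith
  have hK : (∫ u in Set.Ioi (0 : ℝ), Real.log u / (2 * (Real.cosh (u / 2)) ^ 2))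
      = ∫ u in Set.Ioi (0:ℝ), Lfun u := rfl
  rw [hK, Bph_eq β hβ0, key_identity β hβ]
  have hT : |∫ u in Set.Ioi β, (1 - Real.tanh (u / 2)) / u| ≤ 2 * Real.exp (-β) := by
    have hbd : ∀ᵐ u ∂(volume.restrict (Set.Ioi β)),
        ‖(1 - Real.tanh (u / 2)) / u‖ ≤ 2 * Real.exp (-u) := by
      rw [ae_restrict_iff' measurableSet_Ioi]
      refine ae_of_all _ fun u hu => ?_
      have hu1 : (1:ℝ) ≤ u := le_trans hβ (le_of_lt hu)
      have hup : (0:ℝ) < u := by linarith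
      have ht1 : Real.tanh (u / 2) ≤ 1 := tanh_le_one _
      have hb : 1 - Real.tanh (u / 2) ≤ 2 * Real.exp (-u) := by
        have := one_sub_tanh_le (x := u / 2)
        rwa [show -(2 * (u / 2)) = -u by ring] at this
      rw [Real.norm_eq_abs, abs_div, abs_of_nonneg (by linarith), abs_of_pos hup,
        div_le_iff₀ hup]
      calc 1 - Real.tanh (u / 2) ≤ 2 * Real.exp (-u) := hb
        _ = 2 * Real.exp (-u) * 1 := by ring
        _ ≤ 2 * Real.exp (-u) * u := mul_le_mul_of_nonneg_left hu1 (by positivity)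
    have hgint : Integrable (fun u => 2 * Real.exp (-u)) (volume.restrict (Set.Ioi β)) := by
      have h := (exp_neg_integrableOn_Ioi β one_pos).const_mul 2
      simpa [neg_mul, one_mul] using h
    have h := norm_integral_le_of_norm_le hgint hbd
    rw [Real.norm_eq_abs] at h
    calc |∫ u in Set.Ioi β, (1 - Real.tanh (u / 2)) / u|
        ≤ ∫ u in Set.Ioi β, 2 * Real.exp (-u) := h
      _ = 2 * Real.exp (-β) := by
          rw [integral_const_mul, integral_exp_neg_Ioi]
  have habs : -2 * (∫ u in (0:ℝ)..β, Real.tanh (u / 2) / u) + 2 * Real.log β -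
      2 * (Real.log β - (∫ u in (0:ℝ)..β, Real.tanh (u / 2) / u)
        + ∫ u in Set.Ioi β, (1 - Real.tanh (u / 2)) / u)
      = -2 * ∫ u in Set.Ioi β, (1 - Real.tanh (u / 2)) / u := by ring
  rw [habs, abs_mul]
  rw [show |(-2:ℝ)| = 2 by norm_num]
  linarith
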